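/- Let G : ℂ^(n+1) → ℂ be an entire (everywhere analytic) function and k a nonnegative integer such that G(λ·z) = λ^k · G(z) for all λ ∈ ℂ and all z ∈ ℂ^(n+1). Then G is a homogeneous polynomial of degree k; equivalently, in the power series expansion of G at the origin, only the terms of total degree k are nonzero. -/
import Mathlib

open scoped BigOperators

/-- An entire function `G : ℂ^(n+1) → ℂ` satisfying `G (λ • z) = λ^k • G z`
is a homogeneous polynomial of degree `k`. -/
theorem stmt_4 (n k : ℕ) (G : (Fin (n + 1) → ℂ) → ℂ)
    (hG : ∀ z, AnalyticAt ℂ G z)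
    (hhom : ∀ (lam : ℂ) (z : Fin (n + 1) → ℂ), G (lam • z) = lam ^ k * G z) :
    ∃ P : MvPolynomial (Fin (n + 1)) ℂ, P.IsHomogeneous k ∧
      ∀ z, G z = MvPolynomial.eval z P := by
  obtain ⟨p, hp⟩ := hG 0
  obtain ⟨r, hpr⟩ := hp
  -- Step 1: `G z = p k (fun _ => z)` for all `z`.
  have key : ∀ z, G z = p k (fun _ => z) := by
    intro z
    -- two power series for `fun lam => lam ^ k * G z`
    set F1 : FormalMultilinearSeries ℂ ℂ ℂ :=
      fun m => ContinuousMultilinearMap.mkPiRing ℂ (Fin m) (p m (fun _ => z)) with hF1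
    set F2 : FormalMultilinearSeries ℂ ℂ ℂ :=
      fun m => ContinuousMultilinearMap.mkPiRing ℂ (Fin m)
        (if m = k then G z else 0) with hF2
    have h1 : HasFPowerSeriesAt (fun lam : ℂ => lam ^ k * G z) F1 0 := by
      rw [hasFPowerSeriesAt_iff]
      have htend : Filter.Tendsto (fun lam : ℂ => lam • z) (nhds 0) (nhds 0) := by
        simpa using ((continuous_id (X := ℂ)).tendsto 0).smul_const z
      filter_upwards [htend.eventually_mem (EMetric.ball_mem_nhds 0 hpr.r_pos)] with lam hlam
      have := hpr.hasSum (by simpa using hlam)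
      simp only [zero_add] at this ⊢
      rw [← hhom lam z]
      have hfun : (fun m : ℕ => lam ^ m • F1.coeff m)
          = fun m : ℕ => p m (fun _ => lam • z) := by
        funext m
        have h := (p m).map_smul_univ (fun _ : Fin m => lam) (fun _ => z)
        simp only [Finset.prod_const, Finset.card_univ, Fintype.card_fin] at h
        simp only [FormalMultilinearSeries.coeff, hF1,
          ContinuousMultilinearMap.mkPiRing_apply, Pi.one_apply,
          Finset.prod_const_one, one_smul]
        exact h.symm
      rw [hfun]
      exact this
    have h2 : HasFPowerSeriesAt (fun lam : ℂ => lam ^ k * G z) F2 0 := by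
      rw [hasFPowerSeriesAt_iff]
      filter_upwards with lam
      have : (fun m : ℕ => lam ^ m • F2.coeff m)
          = fun m => if m = k then lam ^ k * G z else 0 := by
        funext m
        simp only [FormalMultilinearSeries.coeff, hF2,
          ContinuousMultilinearMap.mkPiRing_apply, Finset.prod_const_one, one_smul]
        split_ifs with h
        · subst h; simp [smul_eq_mul]
        · simp
      rw [this]
      simpa using hasSum_ite_eq k (lam ^ k * G z)
    have hEq : F1 = F2 := h1.eq_formalMultilinearSeries h2
    have := congrFun hEq k
    have h3 := congrArg (fun f : ContinuousMultilinearMap ℂ (fun _ : Fin k => ℂ) ℂ =>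
      f (fun _ => 1)) this
    simp only [hF1, hF2, ContinuousMultilinearMap.mkPiRing_apply, Finset.prod_const_one,
      one_smul, if_pos rfl] at h3
    exact h3.symm
  -- Step 2: the diagonal of `p k` is a homogeneous polynomial.
  classical
  refine ⟨∑ d : Fin k → Fin (n + 1), MvPolynomial.C (p k (fun i => (Pi.single (d i) 1 : Fin (n + 1) → ℂ))) *
      ∏ i : Fin k, MvPolynomial.X (d i), ?_, ?_⟩
  · apply MvPolynomial.IsHomogeneous.sum
    intro d _
    have hprod : MvPolynomial.IsHomogeneous (∏ i : Fin k, MvPolynomial.X (d i) :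
        MvPolynomial (Fin (n + 1)) ℂ) k := by
      have := MvPolynomial.IsHomogeneous.prod Finset.univ
        (fun i : Fin k => (MvPolynomial.X (d i) : MvPolynomial (Fin (n + 1)) ℂ))
        (fun _ => 1) (fun i _ => MvPolynomial.isHomogeneous_X _ _)
      simpa using this
    exact hprod.C_mul _
  · intro z
    rw [key z]
    have hz : (fun _ : Fin k => z) = fun _ : Fin k => ∑ j, z j • (Pi.single j 1 : Fin (n + 1) → ℂ) := by
      funext i
      funext m
      simp [Pi.single_apply, Finset.sum_ite_eq', mul_comm]
    rw [hz]
    rw [(p k).map_sum (g := fun _ j => z j • (Pi.single j 1 : Fin (n + 1) → ℂ))]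
    simp only [MvPolynomial.eval_sum, MvPolynomial.eval_mul, MvPolynomial.eval_C,
      MvPolynomial.eval_prod, MvPolynomial.eval_X]
    congr 1
    funext d
    have := (p k).map_smul_univ (fun i => z (d i)) (fun i => (Pi.single (d i) 1 : Fin (n + 1) → ℂ))
    rw [this, smul_eq_mul, mul_comm]
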